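/- Let d ≥ 2 and let G be a closed fractal subgroup of Aut T_d. If H is an open normal subgroup of G that is prosolvable, then the self-similar closure of H in G is an open, normal, prosolvable subgroup of G. -/

import Mathlib

open scoped Pointwise

namespace TreeDyn

/-- Vertices of the `d`-regular rooted tree: finite words over `{0,…,d-1}`,
with the empty word as root and children of `w` the words `w ++ [x]`. -/
abbrev Vertex (d : ℕ) := List (Fin d)

/-- A function on words is length-preserving and prefix-preserving. -/
def LP (d : ℕ) (f : Vertex d → Vertex d) : Prop :=
  (∀ w : Vertex d, (f w).length = w.length) ∧
    ∀ v w : Vertex d, v <+: w → f v <+: f w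

theorem LP.id' (d : ℕ) : LP d id := ⟨fun _ => rfl, fun _ _ h => h⟩

theorem LP.comp {d : ℕ} {f g : Vertex d → Vertex d} (hf : LP d f) (hg : LP d g) :
    LP d (f ∘ g) :=
  ⟨fun w => (hf.1 (g w)).trans (hg.1 w), fun v w h => hf.2 _ _ (hg.2 _ _ h)⟩

/-- The automorphism group of the rooted `d`-regular tree, realized as the subgroup of
permutations of the vertex set which fix the root and preserve the child relation
(equivalently: length- and prefix-preserving permutations). -/
def treeAut (d : ℕ) : Subgroup (Equiv.Perm (Vertex d)) where
  carrier := {g | LP d ⇑g ∧ LP d ⇑g⁻¹}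
  one_mem' := ⟨LP.id' d, by simpa using LP.id' d⟩
  mul_mem' := by
    rintro a b ⟨ha1, ha2⟩ ⟨hb1, hb2⟩
    refine ⟨?_, ?_⟩
    · simpa [Equiv.Perm.coe_mul] using ha1.comp hb1
    · rw [mul_inv_rev]
      simpa [Equiv.Perm.coe_mul] using hb2.comp ha2
  inv_mem' := by
    rintro a ⟨h1, h2⟩
    exact ⟨h2, by simpa using h1⟩

/-- `Aut T_d`, the automorphism group of the `d`-regular rooted tree. -/
abbrev AutT (d : ℕ) := ↥(treeAut d)

namespace AutT

variable {d : ℕ}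

/-- The underlying permutation of the vertices. -/
def toPerm (g : AutT d) : Equiv.Perm (Vertex d) := g.1

theorem toPerm_mul (g h : AutT d) : (g * h).toPerm = g.toPerm * h.toPerm := rfl

theorem toPerm_inv (g : AutT d) : (g⁻¹).toPerm = (g.toPerm)⁻¹ := rfl

theorem toPerm_one : (1 : AutT d).toPerm = 1 := rfl

theorem length_apply (g : AutT d) (w : Vertex d) : (g.toPerm w).length = w.length :=
  g.2.1.1 w

theorem prefix_apply (g : AutT d) {v w : Vertex d} (h : v <+: w) :
    g.toPerm v <+: g.toPerm w :=
  g.2.1.2 v w h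

theorem take_apply (g : AutT d) (v u : Vertex d) :
    (g.toPerm (v ++ u)).take v.length = g.toPerm v := by
  have h : g.toPerm v <+: g.toPerm (v ++ u) := g.prefix_apply (List.prefix_append v u)
  have h2 := List.prefix_iff_eq_take.mp h
  rw [length_apply] at h2
  exact h2.symm

theorem apply_append (g : AutT d) (v u : Vertex d) :
    g.toPerm (v ++ u) = g.toPerm v ++ (g.toPerm (v ++ u)).drop v.length := by
  conv_lhs => rw [← List.take_append_drop v.length (g.toPerm (v ++ u))]
  rw [take_apply]

/-- The section function: the action of `g` on the subtree over `v`, transported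
to the whole tree. -/
def secFun (g : AutT d) (v : Vertex d) : Vertex d → Vertex d :=
  fun u => (g.toPerm (v ++ u)).drop v.length

theorem secFun_spec (g : AutT d) (v u : Vertex d) :
    g.toPerm (v ++ u) = g.toPerm v ++ secFun g v u :=
  apply_append g v u

theorem secFun_left (g : AutT d) (v u : Vertex d) :
    secFun g⁻¹ (g.toPerm v) (secFun g v u) = u := by
  have h1 := secFun_spec g⁻¹ (g.toPerm v) (secFun g v u)
  rw [← secFun_spec g v u] at h1
  rw [toPerm_inv] at h1
  simp only [Equiv.Perm.inv_def, Equiv.symm_apply_apply] at h1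
  exact (List.append_cancel_left h1).symm

theorem LP_secFun (g : AutT d) (v : Vertex d) : LP d (secFun g v) := by
  constructor
  · intro w
    simp only [secFun, List.length_drop, length_apply, List.length_append]
    omega
  · intro u1 u2 h
    have h2 : g.toPerm (v ++ u1) <+: g.toPerm (v ++ u2) := by
      refine g.prefix_apply ?_
      obtain ⟨t, ht⟩ := h
      exact ⟨t, by rw [List.append_assoc, ht]⟩
    exact h2.drop v.length

/-- The section of the tree automorphism `g` at the vertex `v`: the automorphism `g|_v` with
`g (v ++ u) = g v ++ g|_v u`. -/
def sec (g : AutT d) (v : Vertex d) : AutT d :=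
  ⟨{ toFun := secFun g v
     invFun := secFun g⁻¹ (g.toPerm v)
     left_inv := secFun_left g v
     right_inv := by
       intro u
       have h := secFun_left g⁻¹ (g.toPerm v) u
       rw [inv_inv] at h
       rw [toPerm_inv] at h
       simp only [Equiv.Perm.inv_def, Equiv.symm_apply_apply] at h
       exact h },
   by
     refine ⟨LP_secFun g v, ?_⟩
     have : ⇑(({ toFun := secFun g v
                 invFun := secFun g⁻¹ (g.toPerm v)
                 left_inv := secFun_left g v
                 right_inv := by
                   intro u
                   have h := secFun_left g⁻¹ (g.toPerm v) u
                   rw [inv_inv] at h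
                   rw [toPerm_inv] at h
                   simp only [Equiv.Perm.inv_def, Equiv.symm_apply_apply] at h
                   exact h } : Equiv.Perm (Vertex d))⁻¹) = secFun g⁻¹ (g.toPerm v) := rfl
     rw [this]
     exact LP_secFun g⁻¹ (g.toPerm v)⟩

theorem sec_apply (g : AutT d) (v u : Vertex d) :
    (sec g v).toPerm u = (g.toPerm (v ++ u)).drop v.length := rfl

end AutT

open AutT

/-- The stabilizer of the vertex `v` in `Aut T_d`. -/
def stabT (d : ℕ) (v : Vertex d) : Subgroup (AutT d) where
  carrier := {g | g.toPerm v = v}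
  one_mem' := rfl
  mul_mem' := by
    intro a b ha hb
    show (a * b).toPerm v = v
    rw [toPerm_mul, Equiv.Perm.mul_apply]
    rw [show b.toPerm v = v from hb, show a.toPerm v = v from ha]
  inv_mem' := by
    intro a ha
    show (a⁻¹).toPerm v = v
    rw [toPerm_inv]
    rw [Equiv.Perm.inv_eq_iff_eq]
    exact (show a.toPerm v = v from ha).symm

/-- The self-similarity homomorphism `π_v` from the stabilizer of `v` to `Aut T_d`,
`g ↦ g|_v`. -/
def secHom (d : ℕ) (v : Vertex d) : (stabT d v) →* AutT d where
  toFun g := sec g.1 v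
  map_one' := by
    apply Subtype.ext
    apply Equiv.ext
    intro u
    show ((1 : AutT d).toPerm (v ++ u)).drop v.length = (1 : AutT d).toPerm u
    rw [toPerm_one]
    simp [List.drop_left]
  map_mul' := by
    intro a b
    apply Subtype.ext
    apply Equiv.ext
    intro u
    have hb : (b.1).toPerm v = v := b.2
    show ((a.1 * b.1).toPerm (v ++ u)).drop v.length
        = (sec a.1 v).toPerm ((sec b.1 v).toPerm u)
    rw [toPerm_mul, Equiv.Perm.mul_apply]
    congr 1
    congr 1
    have h := secFun_spec b.1 v u
    rw [hb] at h
    exact h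

/-- The image subgroup `H^v = π_v(H_v)` of the stabilizer of `v` in `H` under the
self-similarity map. -/
def secSG (d : ℕ) (H : Subgroup (AutT d)) (v : Vertex d) : Subgroup (AutT d) :=
  (H.subgroupOf (stabT d v)).map (secHom d v)

/-- A subgroup of `Aut T_d` is self-similar if `H^v ≤ H` for every vertex `v`. -/
def IsSelfSimilar (d : ℕ) (H : Subgroup (AutT d)) : Prop :=
  ∀ v : Vertex d, secSG d H v ≤ H

/-- A subgroup of `Aut T_d` is fractal if `H^v = H` for every vertex `v`. -/
def IsFractal (d : ℕ) (H : Subgroup (AutT d)) : Prop :=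
  ∀ v : Vertex d, secSG d H v = H

end TreeDyn
namespace TreeDyn

open AutT

variable {d : ℕ}

instance : TopologicalSpace (Vertex d) := ⊥
instance : DiscreteTopology (Vertex d) := ⟨rfl⟩

/-- The profinite topology on `Aut T_d`: the topology of pointwise convergence on vertices. -/
instance : TopologicalSpace (AutT d) :=
  TopologicalSpace.induced (fun g : AutT d => (g.toPerm : Vertex d → Vertex d)) inferInstance

theorem continuous_toFun : Continuous fun g : AutT d => (g.toPerm : Vertex d → Vertex d) :=
  continuous_induced_dom

theorem continuous_ev (x : Vertex d) : Continuous fun g : AutT d => g.toPerm x :=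
  (continuous_apply x).comp continuous_toFun

instance : IsTopologicalGroup (AutT d) where
  continuous_mul := by
    apply continuous_induced_rng.2
    show Continuous fun p : AutT d × AutT d => ((p.1 * p.2).toPerm : Vertex d → Vertex d)
    apply continuous_pi
    intro x
    rw [continuous_discrete_rng]
    intro z
    have heq : ((fun p : AutT d × AutT d => (p.1 * p.2).toPerm x)) ⁻¹' {z}
        = ⋃ y : Vertex d, ((fun p : AutT d × AutT d => p.2.toPerm x) ⁻¹' {y})
            ∩ ((fun p : AutT d × AutT d => p.1.toPerm y) ⁻¹' {z}) := by
      ext p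
      simp only [Set.mem_preimage, Set.mem_singleton_iff, Set.mem_iUnion, Set.mem_inter_iff]
      constructor
      · intro h
        exact ⟨p.2.toPerm x, rfl, by rw [toPerm_mul, Equiv.Perm.mul_apply] at h; exact h⟩
      · rintro ⟨y, h1, h2⟩
        rw [toPerm_mul, Equiv.Perm.mul_apply, h1, h2]
    rw [heq]
    apply isOpen_iUnion
    intro y
    exact ((isOpen_discrete _).preimage ((continuous_ev x).comp continuous_snd)).inter
      ((isOpen_discrete _).preimage ((continuous_ev y).comp continuous_fst))
  continuous_inv := by
    apply continuous_induced_rng.2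
    show Continuous fun g : AutT d => ((g⁻¹).toPerm : Vertex d → Vertex d)
    apply continuous_pi
    intro x
    rw [continuous_discrete_rng]
    intro z
    have heq : (fun g : AutT d => (g⁻¹).toPerm x) ⁻¹' {z}
        = (fun g : AutT d => g.toPerm z) ⁻¹' {x} := by
      ext g
      simp only [Set.mem_preimage, Set.mem_singleton_iff]
      rw [toPerm_inv]
      exact Equiv.Perm.inv_eq_iff_eq.trans eq_comm
    rw [heq]
    exact (isOpen_discrete _).preimage (continuous_ev z)

end TreeDyn
namespace TreeDyn

open AutT

/-- `J` is the self-similar closure of `H` in `G`: the smallest closed self-similar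
subgroup of `G` containing `H`. -/
def IsSelfSimilarClosure (d : ℕ) (G H J : Subgroup (AutT d)) : Prop :=
  H ≤ J ∧ J ≤ G ∧ IsClosed (J : Set (AutT d)) ∧ IsSelfSimilar d J ∧
    ∀ J' : Subgroup (AutT d), H ≤ J' → J' ≤ G → IsClosed (J' : Set (AutT d)) →
      IsSelfSimilar d J' → J ≤ J'

/-- The pointwise stabilizer in `Aut T_d` of the vertices at level `m`. -/
def levelStab (d : ℕ) (m : ℕ) : Subgroup (AutT d) where
  carrier := {g | ∀ v : Vertex d, v.length = m → g.toPerm v = v}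
  one_mem' := fun _ _ => rfl
  mul_mem' := by
    intro a b ha hb v hv
    show (a * b).toPerm v = v
    rw [toPerm_mul, Equiv.Perm.mul_apply, hb v hv, ha v hv]
  inv_mem' := by
    intro a ha v hv
    show (a⁻¹).toPerm v = v
    rw [toPerm_inv, Equiv.Perm.inv_eq_iff_eq]
    exact (ha v hv).symm

/-- A topological group is pronilpotent if its quotient by every open normal subgroup
is nilpotent. -/
def Pronilpotent (G : Type*) [Group G] [TopologicalSpace G] : Prop :=
  ∀ (N : Subgroup G) [N.Normal], IsOpen (N : Set G) → Group.IsNilpotent (G ⧸ N)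

/-- A topological group is pro-`p` if its quotient by every open normal subgroup
is a `p`-group. -/
def IsProP (p : ℕ) (G : Type*) [Group G] [TopologicalSpace G] : Prop :=
  ∀ (N : Subgroup G) [N.Normal], IsOpen (N : Set G) → IsPGroup p (G ⧸ N)

/-- A topological group is prosolvable if its quotient by every open normal subgroup
is solvable. -/
def Prosolvable (G : Type*) [Group G] [TopologicalSpace G] : Prop :=
  ∀ (N : Subgroup G) [N.Normal], IsOpen (N : Set G) → IsSolvable (G ⧸ N)

/-- The Frattini subgroup of a topological group: the intersection of its
maximal open (proper) subgroups. -/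
def frattiniOpen (G : Type*) [Group G] [TopologicalSpace G] : Subgroup G :=
  sInf {M : Subgroup G | IsOpen (M : Set G) ∧ M ≠ ⊤ ∧
    ∀ M' : Subgroup G, IsOpen (M' : Set G) → M < M' → M' = ⊤}

end TreeDyn
namespace TreeDyn

open AutT

variable {d : ℕ}

/-- The cyclic successor on `Fin d`. -/
def succFin (x : Fin d) : Fin d :=
  ⟨(x.1 + 1) % d, Nat.mod_lt _ (Nat.lt_of_le_of_lt (Nat.zero_le _) x.2)⟩

/-- The cyclic predecessor on `Fin d`. -/
def predFin (x : Fin d) : Fin d :=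
  ⟨(x.1 + (d - 1)) % d, Nat.mod_lt _ (Nat.lt_of_le_of_lt (Nat.zero_le _) x.2)⟩

theorem predFin_succFin (x : Fin d) : predFin (succFin x) = x := by
  have hd : 0 < d := Nat.lt_of_le_of_lt (Nat.zero_le _) x.2
  apply Fin.ext
  show ((x.1 + 1) % d + (d - 1)) % d = x.1
  rw [Nat.mod_add_mod, show x.1 + 1 + (d - 1) = x.1 + d by omega, Nat.add_mod_right,
    Nat.mod_eq_of_lt x.2]

theorem succFin_predFin (x : Fin d) : succFin (predFin x) = x := by
  have hd : 0 < d := Nat.lt_of_le_of_lt (Nat.zero_le _) x.2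
  apply Fin.ext
  show ((x.1 + (d - 1)) % d + 1) % d = x.1
  rw [Nat.mod_add_mod, show x.1 + (d - 1) + 1 = x.1 + d by omega, Nat.add_mod_right,
    Nat.mod_eq_of_lt x.2]

theorem succFin_val_eq_zero_iff (x : Fin d) : (succFin x).1 = 0 ↔ x.1 + 1 = d := by
  show (x.1 + 1) % d = 0 ↔ x.1 + 1 = d
  by_cases h : x.1 + 1 = d
  · simp [h, Nat.mod_self]
  · rw [Nat.mod_eq_of_lt (by omega)]
    omega

theorem predFin_val_succ_eq_iff (x : Fin d) : (predFin x).1 + 1 = d ↔ x.1 = 0 := by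
  have hd : 0 < d := Nat.lt_of_le_of_lt (Nat.zero_le _) x.2
  show (x.1 + (d - 1)) % d + 1 = d ↔ x.1 = 0
  rcases Nat.eq_zero_or_pos x.1 with h | h
  · rw [h]
    simp only [Nat.zero_add]
    rw [Nat.mod_eq_of_lt (show d - 1 < d by omega)]
    simp only [iff_true, eq_self_iff_true]
    omega
  · rw [show x.1 + (d - 1) = (x.1 - 1) + d by omega, Nat.add_mod_right,
      Nat.mod_eq_of_lt (show x.1 - 1 < d by omega)]
    omega

/-- The odometer function: adds one with carrying, on words read root-first. -/
def odF (d : ℕ) : Vertex d → Vertex d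
  | [] => []
  | x :: u => succFin x :: (if x.1 + 1 = d then odF d u else u)

/-- The inverse odometer function. -/
def odG (d : ℕ) : Vertex d → Vertex d
  | [] => []
  | x :: u => predFin x :: (if x.1 = 0 then odG d u else u)

theorem odG_odF (u : Vertex d) : odG d (odF d u) = u := by
  induction u with
  | nil => rfl
  | cons x t ih =>
    simp only [odF, odG, predFin_succFin]
    by_cases h : x.1 + 1 = d
    · rw [if_pos h, if_pos ((succFin_val_eq_zero_iff x).mpr h), ih]
    · rw [if_neg h, if_neg (fun hc => h ((succFin_val_eq_zero_iff x).mp hc))]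

theorem odF_odG (u : Vertex d) : odF d (odG d u) = u := by
  induction u with
  | nil => rfl
  | cons x t ih =>
    simp only [odF, odG, succFin_predFin]
    by_cases h : x.1 = 0
    · rw [if_pos h, if_pos ((predFin_val_succ_eq_iff x).mpr h), ih]
    · rw [if_neg h, if_neg (fun hc => h ((predFin_val_succ_eq_iff x).mp hc))]

theorem odF_append (a b : Vertex d) :
    odF d (a ++ b) = odF d a ++ (if ∀ x ∈ a, x.1 + 1 = d then odF d b else b) := by
  induction a with
  | nil => simp [odF]
  | cons x t ih =>
    by_cases h : x.1 + 1 = d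
    · by_cases h2 : ∀ y ∈ t, y.1 + 1 = d
      · have hall : ∀ y ∈ x :: t, y.1 + 1 = d := by
          intro y hy
          rcases List.mem_cons.mp hy with rfl | hy
          · exact h
          · exact h2 y hy
        simp only [List.cons_append, List.append_eq, odF, if_pos h, if_pos h2, if_pos hall, ih]
      · have hall : ¬ ∀ y ∈ x :: t, y.1 + 1 = d :=
          fun hc => h2 fun y hy => hc y (List.mem_cons_of_mem x hy)
        simp only [List.cons_append, List.append_eq, odF, if_pos h, if_neg h2, if_neg hall, ih]
    · have hall : ¬ ∀ y ∈ x :: t, y.1 + 1 = d :=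
        fun hc => h (hc x (List.mem_cons_self))
      simp only [List.cons_append, List.append_eq, odF, if_neg h, if_neg hall]

theorem odG_append (a b : Vertex d) :
    odG d (a ++ b) = odG d a ++ (if ∀ x ∈ a, x.1 = 0 then odG d b else b) := by
  induction a with
  | nil => simp [odG]
  | cons x t ih =>
    by_cases h : x.1 = 0
    · by_cases h2 : ∀ y ∈ t, y.1 = 0
      · have hall : ∀ y ∈ x :: t, y.1 = 0 := by
          intro y hy
          rcases List.mem_cons.mp hy with rfl | hy
          · exact h
          · exact h2 y hy
        simp only [List.cons_append, List.append_eq, odG, if_pos h, if_pos h2, if_pos hall, ih]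
      · have hall : ¬ ∀ y ∈ x :: t, y.1 = 0 :=
          fun hc => h2 fun y hy => hc y (List.mem_cons_of_mem x hy)
        simp only [List.cons_append, List.append_eq, odG, if_pos h, if_neg h2, if_neg hall, ih]
    · have hall : ¬ ∀ y ∈ x :: t, y.1 = 0 :=
        fun hc => h (hc x (List.mem_cons_self))
      simp only [List.cons_append, List.append_eq, odG, if_neg h, if_neg hall]

theorem LP_odF : LP d (odF d) := by
  constructor
  · intro w
    induction w with
    | nil => rfl
    | cons x t ih =>
      simp only [odF]
      by_cases h : x.1 + 1 = d <;> simp [h, ih]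
  · intro v w h
    obtain ⟨t, rfl⟩ := h
    rw [odF_append]
    exact ⟨_, rfl⟩

theorem LP_odG : LP d (odG d) := by
  constructor
  · intro w
    induction w with
    | nil => rfl
    | cons x t ih =>
      simp only [odG]
      by_cases h : x.1 = 0 <;> simp [h, ih]
  · intro v w h
    obtain ⟨t, rfl⟩ := h
    rw [odG_append]
    exact ⟨_, rfl⟩

/-- The standard odometer as a permutation of the vertices. -/
def odPerm (d : ℕ) : Equiv.Perm (Vertex d) where
  toFun := odF d
  invFun := odG d
  left_inv := odG_odF
  right_inv := odF_odG

/-- The standard odometer `ω ∈ Aut T_d` (adds one to a `d`-adic digit string,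
with carrying). -/
def od (d : ℕ) : AutT d :=
  ⟨odPerm d, ⟨LP_odF, LP_odG⟩⟩

/-- The standard `d`-cycle `σ = (0 1 … d-1)` on the first level. -/
def sigmaFin (d : ℕ) : Equiv.Perm (Fin d) where
  toFun := succFin
  invFun := predFin
  left_inv := predFin_succFin
  right_inv := succFin_predFin

end TreeDyn

namespace TreeDyn

open AutT

/-! ### Auxiliary general group-theoretic lemmas -/

section SolvableAux

variable {Γ : Type*} [Group Γ]

theorem aux_isSolvable_of_mulEquiv {Γ₂ : Type*} [Group Γ₂] (e : Γ ≃* Γ₂)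
    (h : IsSolvable Γ) : IsSolvable Γ₂ := by
  haveI : Group.IsSolvable Γ := h
  exact solvable_of_solvable_injective (f := e.symm.toMonoidHom) e.symm.injective

theorem aux_solvable_of_le {A B : Subgroup Γ} (h : A ≤ B) (hB : IsSolvable B) :
    IsSolvable A := by
  haveI : Group.IsSolvable B := hB
  exact solvable_of_solvable_injective (f := Subgroup.inclusion h) (Subgroup.inclusion_injective h)

theorem aux_range_solvable_of_ker_le {A Γ₁ Γ₂ : Type*} [Group A] [Group Γ₁] [Group Γ₂]
    (α : A →* Γ₁) (χ : A →* Γ₂) (h : α.ker ≤ χ.ker) (hs : IsSolvable α.range) :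
    IsSolvable χ.range := by
  haveI : Group.IsSolvable (A ⧸ α.ker) :=
    aux_isSolvable_of_mulEquiv (QuotientGroup.quotientKerEquivRange α).symm hs
  haveI : Group.IsSolvable (A ⧸ χ.ker) := by
    refine solvable_of_surjective
      (f := QuotientGroup.map α.ker χ.ker (MonoidHom.id A) (by simpa using h)) ?_
    intro x
    obtain ⟨a, rfl⟩ := QuotientGroup.mk'_surjective χ.ker x
    refine ⟨QuotientGroup.mk a, ?_⟩
    rw [QuotientGroup.mk'_apply, QuotientGroup.map_mk]
    rfl
  exact aux_isSolvable_of_mulEquiv (QuotientGroup.quotientKerEquivRange χ) this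

theorem aux_conj_mem_closure {s : Set Γ} {p : Γ}
    (h : ∀ x ∈ s, p * x * p⁻¹ ∈ Subgroup.closure s) :
    ∀ x ∈ Subgroup.closure s, p * x * p⁻¹ ∈ Subgroup.closure s := by
  intro x hx
  refine Subgroup.closure_induction (fun z hz => h z hz)
    (by simpa using one_mem (Subgroup.closure s)) ?_ ?_ hx
  · intro z w _ _ hz hw
    have : p * (z * w) * p⁻¹ = (p * z * p⁻¹) * (p * w * p⁻¹) := by group
    rw [this]; exact mul_mem hz hw
  · intro z _ hz
    have : p * z⁻¹ * p⁻¹ = (p * z * p⁻¹)⁻¹ := by group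
    rw [this]; exact inv_mem hz

theorem aux_conj_mem_sup {A B : Subgroup Γ} {p : Γ}
    (hA : ∀ x ∈ A, p * x * p⁻¹ ∈ A) (hB : ∀ x ∈ B, p * x * p⁻¹ ∈ B) :
    ∀ x ∈ A ⊔ B, p * x * p⁻¹ ∈ A ⊔ B := by
  rw [Subgroup.sup_eq_closure]
  refine aux_conj_mem_closure ?_
  intro x hx
  rcases hx with hx | hx
  · exact Subgroup.subset_closure (Set.mem_union_left _ (hA x hx))
  · exact Subgroup.subset_closure (Set.mem_union_right _ (hB x hx))

theorem aux_conj_mem_iSup {ι : Sort*} {N : ι → Subgroup Γ} {p : Γ}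
    (h : ∀ i, ∀ x ∈ N i, p * x * p⁻¹ ∈ N i) :
    ∀ x ∈ ⨆ i, N i, p * x * p⁻¹ ∈ ⨆ i, N i := by
  intro x hx
  refine Subgroup.iSup_induction (C := fun z => p * z * p⁻¹ ∈ ⨆ i, N i) N hx ?_
    (by simpa using one_mem (⨆ i, N i)) ?_
  · intro i z hz
    exact Subgroup.mem_iSup_of_mem i (h i z hz)
  · intro z w hz hw
    have : p * (z * w) * p⁻¹ = (p * z * p⁻¹) * (p * w * p⁻¹) := by group
    rw [this]; exact mul_mem hz hw

/-- If `B` normalizes `A` and both are solvable, then `A ⊔ B` is solvable. -/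
theorem aux_isSolvable_sup {A B : Subgroup Γ} (hB : B ≤ Subgroup.normalizer (A : Set Γ))
    (hA : IsSolvable A) (hBs : IsSolvable B) : IsSolvable ↥(A ⊔ B) := by
  have hnorm_le : A ⊔ B ≤ Subgroup.normalizer (A : Set Γ) := sup_le Subgroup.le_normalizer hB
  set A' : Subgroup ↥(A ⊔ B) := A.subgroupOf (A ⊔ B) with hA'def
  haveI : A'.Normal := by
    constructor
    intro n hn g
    rw [hA'def, Subgroup.mem_subgroupOf] at hn ⊢
    have h1 := (Subgroup.mem_normalizer_iff.mp (hnorm_le g.2) (n : Γ)).mp hn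
    simpa using h1
  haveI hA's : Group.IsSolvable ↥A' := by
    haveI : Group.IsSolvable A := hA
    exact solvable_of_solvable_injective
      (f := (Subgroup.subgroupOfEquivOfLe (le_sup_left : A ≤ A ⊔ B)).toMonoidHom)
      (MulEquiv.injective _)
  haveI : Group.IsSolvable (↥(A ⊔ B) ⧸ A') := by
    haveI : Group.IsSolvable B := hBs
    set β : ↥B →* ↥(A ⊔ B) ⧸ A' :=
      (QuotientGroup.mk' A').comp (Subgroup.inclusion (le_sup_right : B ≤ A ⊔ B)) with hβdef
    apply solvable_of_surjective (f := β)
    intro x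
    obtain ⟨y, rfl⟩ := QuotientGroup.mk'_surjective A' x
    have hy2 : (y : Γ) ∈ Subgroup.closure ((A : Set Γ) ∪ B) := by
      rw [← Subgroup.sup_eq_closure]; exact y.2
    have key : ∀ z, z ∈ Subgroup.closure ((A : Set Γ) ∪ B) →
        ∀ hz' : z ∈ A ⊔ B, ∃ b : ↥B, β b = QuotientGroup.mk' A' ⟨z, hz'⟩ := by
      intro z hz
      refine Subgroup.closure_induction
        (p := fun z _ => ∀ hz' : z ∈ A ⊔ B, ∃ b : ↥B, β b = QuotientGroup.mk' A' ⟨z, hz'⟩)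
        ?_ ?_ ?_ ?_ hz
      · intro w hw hw'
        rcases hw with hw | hw
        · refine ⟨1, ?_⟩
          rw [map_one]
          exact ((QuotientGroup.eq_one_iff _).mpr (Subgroup.mem_subgroupOf.mpr hw)).symm
        · exact ⟨⟨w, hw⟩, rfl⟩
      · intro hz'
        refine ⟨1, ?_⟩
        rw [map_one]
        exact ((QuotientGroup.eq_one_iff _).mpr (one_mem A')).symm
      · intro u w hu hw ihu ihw hz'
        have hu' : u ∈ A ⊔ B := by rw [Subgroup.sup_eq_closure]; exact hu
        have hw' : w ∈ A ⊔ B := by rw [Subgroup.sup_eq_closure]; exact hw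
        obtain ⟨bu, hbu⟩ := ihu hu'
        obtain ⟨bw, hbw⟩ := ihw hw'
        refine ⟨bu * bw, ?_⟩
        rw [map_mul, hbu, hbw]
        rfl
      · intro u hu ihu hz'
        have hu' : u ∈ A ⊔ B := by rw [Subgroup.sup_eq_closure]; exact hu
        obtain ⟨bu, hbu⟩ := ihu hu'
        refine ⟨bu⁻¹, ?_⟩
        rw [map_inv, hbu]
        rfl
    obtain ⟨b, hb⟩ := key (y : Γ) hy2 y.2
    exact ⟨b, hb⟩
  exact solvable_of_ker_le_range A'.subtype (QuotientGroup.mk' A')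
    (by rw [QuotientGroup.ker_mk', Subgroup.range_subtype])

/-- In a finite group, the join of a family of solvable subgroups, all contained in `P`
and all normalized by `P`, is solvable. -/
theorem aux_isSolvable_iSup {ι : Type*} [Finite Γ] (P : Subgroup Γ) (N : ι → Subgroup Γ)
    (hle : ∀ i, N i ≤ P)
    (hnorm : ∀ i, ∀ p ∈ P, ∀ x ∈ N i, p * x * p⁻¹ ∈ N i)
    (hsolv : ∀ i, IsSolvable (N i)) : IsSolvable ↥(⨆ i, N i) := by
  classical
  haveI : Finite (Subgroup Γ) :=
    Finite.of_injective (fun K : Subgroup Γ => (K : Set Γ)) SetLike.coe_injective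
  -- invariants for finite sub-joins
  have main : ∀ t : Finset ι, (t.sup N ≤ P) ∧
      (∀ p ∈ P, ∀ x ∈ t.sup N, p * x * p⁻¹ ∈ t.sup N) ∧ IsSolvable ↥(t.sup N) := by
    intro t
    induction t using Finset.induction_on with
    | empty =>
      refine ⟨by simp, by simp, ?_⟩
      have : Subsingleton ↥((⊥ : Finset ι).sup N) := by
        constructor
        intro a b
        apply Subtype.ext
        have ha := a.2; have hb := b.2
        simp only [Finset.sup_empty, Finset.bot_eq_empty] at ha hb ⊢
        rw [Subgroup.mem_bot] at ha hb
        rw [ha, hb]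
      haveI : Group.IsSolvable ↥((⊥ : Finset ι).sup N) := inferInstance
      exact this
    | @insert i t hit ih =>
      obtain ⟨ihle, ihnorm, ihsolv⟩ := ih
      rw [Finset.sup_insert]
      have hBnorm : t.sup N ≤ Subgroup.normalizer (N i : Set Γ) := by
        intro b hb
        rw [Subgroup.mem_normalizer_iff]
        intro h
        constructor
        · exact fun hh => hnorm i b (ihle hb) h hh
        · intro hh
          have h2 := hnorm i b⁻¹ (inv_mem (ihle hb)) _ hh
          simpa [mul_assoc] using h2
      refine ⟨sup_le (hle i) ihle, ?_, ?_⟩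
      · intro p hp
        exact aux_conj_mem_sup (fun x hx => hnorm i p hp x hx) (fun x hx => ihnorm p hp x hx)
      · exact aux_isSolvable_sup hBnorm (hsolv i) ihsolv
  -- the full join equals a finite sub-join
  have hfin : (Set.range fun t : Finset ι => t.sup N).Finite := Set.toFinite _
  have hne : (Set.range fun t : Finset ι => t.sup N).Nonempty := ⟨_, ⟨∅, rfl⟩⟩
  obtain ⟨M, hM, hMmax⟩ := Set.Finite.exists_maximalFor id _ hfin hne
  obtain ⟨t₀, rfl⟩ := hM
  have hall : ∀ i, N i ≤ t₀.sup N := by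
    intro i
    have h1 : t₀.sup N ≤ (insert i t₀).sup N := Finset.sup_mono (Finset.subset_insert i t₀)
    have h2 := hMmax ⟨insert i t₀, rfl⟩ h1
    exact le_trans (Finset.le_sup (Finset.mem_insert_self i t₀)) h2
  have heq : (⨆ i, N i) = t₀.sup N := by
    refine le_antisymm (iSup_le hall) ?_
    exact Finset.sup_le fun i _ => le_iSup N i
  rw [heq]
  exact (main t₀).2.2

end SolvableAux

/-! ### Tree-specific auxiliary lemmas -/

variable {d : ℕ}

theorem isOpen_stabT (v : Vertex d) : IsOpen ((stabT d v : Subgroup (AutT d)) : Set (AutT d)) := by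
  have : ((stabT d v : Subgroup (AutT d)) : Set (AutT d))
      = (fun g : AutT d => g.toPerm v) ⁻¹' {v} := rfl
  rw [this]
  exact (isOpen_discrete _).preimage (continuous_ev v)

theorem continuous_sec (v : Vertex d) : Continuous fun g : AutT d => sec g v := by
  apply continuous_induced_rng.2
  show Continuous fun g : AutT d => ((sec g v).toPerm : Vertex d → Vertex d)
  apply continuous_pi
  intro u
  show Continuous fun g : AutT d => (g.toPerm (v ++ u)).drop v.length
  exact (continuous_of_discreteTopology (f := fun l : Vertex d => l.drop v.length)).comp
    (continuous_ev (v ++ u))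

theorem mem_levelStab_of_le (hd : 0 < d) {m : ℕ} {g : AutT d} (hg : g ∈ levelStab d m)
    {v : Vertex d} (hv : v.length ≤ m) : g.toPerm v = v := by
  set w : Vertex d := v ++ List.replicate (m - v.length) (⟨0, hd⟩ : Fin d) with hw
  have hwlen : w.length = m := by
    simp [hw, List.length_append, List.length_replicate]
    omega
  have hgw : g.toPerm w = w := hg w hwlen
  have hpre : g.toPerm v <+: g.toPerm w := g.prefix_apply (List.prefix_append v _)
  rw [hgw] at hpre
  have h1 : g.toPerm v = w.take (g.toPerm v).length := List.prefix_iff_eq_take.mp hpre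
  have h2 : v = w.take v.length := List.prefix_iff_eq_take.mp (List.prefix_append v _)
  rw [length_apply] at h1
  rw [h1, ← h2]

instance levelStab_normal (d m : ℕ) : (levelStab d m).Normal := by
  constructor
  intro n hn g
  intro v hv
  show (g * n * g⁻¹).toPerm v = v
  rw [toPerm_mul, toPerm_mul, toPerm_inv]
  simp only [Equiv.Perm.mul_apply]
  have hlen : ((g.toPerm)⁻¹ v).length = m := by
    have := length_apply g⁻¹ v
    rw [toPerm_inv] at this
    rw [this, hv]
  rw [hn _ hlen, Equiv.Perm.inv_def, Equiv.apply_symm_apply]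

theorem isOpen_levelStab (d m : ℕ) : IsOpen ((levelStab d m : Subgroup (AutT d)) : Set (AutT d)) := by
  haveI : Finite {v : Vertex d // v.length = m} := (List.finite_length_eq (Fin d) m).to_subtype
  have heq : ((levelStab d m : Subgroup (AutT d)) : Set (AutT d))
      = ⋂ v : {v : Vertex d // v.length = m}, {g : AutT d | g.toPerm v.1 = v.1} := by
    ext g
    simp only [Set.mem_iInter, Set.mem_setOf_eq, Subtype.forall]
    exact Iff.rfl
  rw [heq]
  exact isOpen_iInter_of_finite fun v =>
    (isOpen_discrete ({(v.1 : Vertex d)} : Set (Vertex d))).preimage (continuous_ev v.1)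

theorem levelStab_basis (hd : 0 < d) {U : Set (AutT d)} (hU : IsOpen U)
    (h1 : (1 : AutT d) ∈ U) : ∃ m, ((levelStab d m : Subgroup (AutT d)) : Set (AutT d)) ⊆ U := by
  obtain ⟨V, hV, hVU⟩ := isOpen_induced_iff.mp hU
  have h1V : (fun g : AutT d => (g.toPerm : Vertex d → Vertex d)) 1 ∈ V := by
    rw [← hVU] at h1
    exact h1
  obtain ⟨I, u, hu, hsub⟩ := isOpen_pi_iff.mp hV _ h1V
  refine ⟨I.sup List.length, ?_⟩
  intro g hg
  have hgV : (fun g : AutT d => (g.toPerm : Vertex d → Vertex d)) g ∈ V := by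
    apply hsub
    intro w hw
    have hfix : g.toPerm w = w := mem_levelStab_of_le hd hg (Finset.le_sup hw)
    have h2 : w ∈ u w := (hu w hw).2
    show g.toPerm w ∈ u w
    rw [hfix]
    exact h2
  rw [← hVU]
  exact hgV

theorem finite_quot_levelStab (hd : 0 < d) (m : ℕ) : Finite (AutT d ⧸ levelStab d m) := by
  haveI : Finite {v : Vertex d // v.length ≤ m} := (List.finite_length_le (Fin d) m).to_subtype
  refine Finite.of_injective (fun x : AutT d ⧸ levelStab d m => Quotient.liftOn' x
    (fun g => fun v : {v : Vertex d // v.length ≤ m} =>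
      (⟨g.toPerm v.1, by rw [length_apply]; exact v.2⟩ : {v : Vertex d // v.length ≤ m}))
    ?_) ?_
  · intro a b hab
    have hab' : a⁻¹ * b ∈ levelStab d m := QuotientGroup.leftRel_apply.mp hab
    funext v
    apply Subtype.ext
    show a.toPerm v.1 = b.toPerm v.1
    have hfix : (a⁻¹ * b).toPerm v.1 = v.1 := mem_levelStab_of_le hd hab' v.2
    rw [toPerm_mul, toPerm_inv] at hfix
    simp only [Equiv.Perm.mul_apply] at hfix
    calc a.toPerm v.1 = a.toPerm ((a.toPerm)⁻¹ (b.toPerm v.1)) := by rw [hfix]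
    _ = b.toPerm v.1 := (a.toPerm).apply_symm_apply _
  · intro x y
    refine Quotient.inductionOn₂' x y ?_
    intro a b hab
    apply Quotient.sound'
    rw [QuotientGroup.leftRel_apply]
    intro v hv
    have hvals : a.toPerm v = b.toPerm v :=
      congrArg Subtype.val (congrFun hab ⟨v, le_of_eq hv⟩)
    show (a⁻¹ * b).toPerm v = v
    rw [toPerm_mul, toPerm_inv]
    simp only [Equiv.Perm.mul_apply]
    rw [← hvals, Equiv.Perm.inv_def, Equiv.symm_apply_apply]

theorem mem_secSG_iff {A : Subgroup (AutT d)} {v : Vertex d} {x : AutT d} :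
    x ∈ secSG d A v ↔ ∃ g : AutT d, g ∈ stabT d v ∧ g ∈ A ∧ sec g v = x := by
  constructor
  · rintro ⟨⟨g, hgs⟩, hgA, rfl⟩
    exact ⟨g, hgs, Subgroup.mem_subgroupOf.mp hgA, rfl⟩
  · rintro ⟨g, hgs, hgA, rfl⟩
    exact ⟨⟨g, hgs⟩, Subgroup.mem_subgroupOf.mpr hgA, rfl⟩

theorem secSG_mono {A B : Subgroup (AutT d)} (h : A ≤ B) (v : Vertex d) :
    secSG d A v ≤ secSG d B v := by
  apply Subgroup.map_mono
  intro x hx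
  exact Subgroup.mem_subgroupOf.mpr (h (Subgroup.mem_subgroupOf.mp hx))

/-- Conjugation-invariance of a subgroup under a subgroup `G`. -/
def ConjCl (G A : Subgroup (AutT d)) : Prop :=
  ∀ g ∈ G, ∀ x ∈ A, g * x * g⁻¹ ∈ A

theorem conjCl_secSG {G A : Subgroup (AutT d)} (hG : IsFractal d G) (hA : ConjCl G A)
    (v : Vertex d) : ConjCl G (secSG d A v) := by
  intro g hg x hx
  obtain ⟨h, hhs, hhA, rfl⟩ := mem_secSG_iff.mp hx
  -- find a lift of g stabilizing v
  have hgmem : g ∈ secSG d G v := by rw [hG v]; exact hg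
  obtain ⟨g', hg's, hg'G, hg'sec⟩ := mem_secSG_iff.mp hgmem
  have hconj : g' * h * g'⁻¹ ∈ A := hA g' hg'G h hhA
  have hconjs : g' * h * g'⁻¹ ∈ stabT d v := mul_mem (mul_mem hg's hhs) (inv_mem hg's)
  rw [mem_secSG_iff]
  refine ⟨g' * h * g'⁻¹, hconjs, hconj, ?_⟩
  have e0 : sec (g' * h * g'⁻¹) v = (secHom d v) (⟨g' * h * g'⁻¹, hconjs⟩ : stabT d v) := rfl
  have e1 : (⟨g' * h * g'⁻¹, hconjs⟩ : stabT d v)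
      = (⟨g', hg's⟩ : stabT d v) * ⟨h, hhs⟩ * (⟨g', hg's⟩ : stabT d v)⁻¹ := rfl
  rw [e0, e1, map_mul, map_mul, map_inv]
  show sec g' v * sec h v * (sec g' v)⁻¹ = g * sec h v * g⁻¹
  rw [hg'sec]

/-- The iterated section subgroups. -/
def Hs (d : ℕ) (H : Subgroup (AutT d)) : ℕ → Subgroup (AutT d)
  | 0 => H
  | n + 1 => Hs d H n ⊔ ⨆ v : Vertex d, secSG d (Hs d H n) v

theorem Hs_zero (H : Subgroup (AutT d)) : Hs d H 0 = H := rfl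

theorem Hs_succ (H : Subgroup (AutT d)) (n : ℕ) :
    Hs d H (n + 1) = Hs d H n ⊔ ⨆ v : Vertex d, secSG d (Hs d H n) v := rfl

theorem Hs_mono (H : Subgroup (AutT d)) : Monotone (Hs d H) :=
  monotone_nat_of_le_succ fun _ => le_sup_left

theorem Hs_le (G H : Subgroup (AutT d)) (hG : IsFractal d G) (hHG : H ≤ G) (n : ℕ) :
    Hs d H n ≤ G := by
  induction n with
  | zero => exact hHG
  | succ n ih =>
    rw [Hs_succ]
    exact sup_le ih (iSup_le fun v => (secSG_mono ih v).trans (le_of_eq (hG v)))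

theorem conjCl_Hs (G H : Subgroup (AutT d)) (hG : IsFractal d G) (hH : ConjCl G H) (n : ℕ) :
    ConjCl G (Hs d H n) := by
  induction n with
  | zero => exact hH
  | succ n ih =>
    rw [Hs_succ]
    intro g hg
    refine aux_conj_mem_sup (fun x hx => ih g hg x hx) ?_
    exact aux_conj_mem_iSup (fun v => conjCl_secSG hG ih v g hg)

theorem Hs_le_selfSimilar (H J : Subgroup (AutT d)) (hHJ : H ≤ J) (hJss : IsSelfSimilar d J)
    (n : ℕ) : Hs d H n ≤ J := by
  induction n with
  | zero => exact hHJ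
  | succ n ih =>
    rw [Hs_succ]
    exact sup_le ih (iSup_le fun v => (secSG_mono ih v).trans (hJss v))

/-! ### Solvability of the images of the iterated section subgroups -/

theorem solvable_secSG_map {A : Subgroup (AutT d)} (v : Vertex d) (m : ℕ)
    (hIH : IsSolvable ↥(A.map (QuotientGroup.mk' (levelStab d (v.length + m))))) :
    IsSolvable ↥((secSG d A v).map (QuotientGroup.mk' (levelStab d m))) := by
  set B : Subgroup (AutT d) := A ⊓ stabT d v with hBdef
  set α : ↥B →* (AutT d ⧸ levelStab d (v.length + m)) :=
    (QuotientGroup.mk' (levelStab d (v.length + m))).comp B.subtype with hαdef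
  set χ : ↥B →* (AutT d ⧸ levelStab d m) :=
    (QuotientGroup.mk' (levelStab d m)).comp
      ((secHom d v).comp (Subgroup.inclusion (inf_le_right : B ≤ stabT d v))) with hχdef
  have hker : α.ker ≤ χ.ker := by
    intro x hx
    have hx1 : (x : AutT d) ∈ levelStab d (v.length + m) := by
      have h1 : α x = 1 := MonoidHom.mem_ker.mp hx
      rw [hαdef, MonoidHom.comp_apply, QuotientGroup.mk'_apply,
        QuotientGroup.eq_one_iff] at h1
      exact h1
    rw [MonoidHom.mem_ker, hχdef, MonoidHom.comp_apply, MonoidHom.comp_apply,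
      QuotientGroup.mk'_apply, QuotientGroup.eq_one_iff]
    intro u hu
    show (sec (x : AutT d) v).toPerm u = u
    rw [sec_apply]
    have hlen : ((v ++ u) : Vertex d).length = v.length + m := by
      rw [List.length_append, hu]
    rw [hx1 _ hlen, List.drop_left]
  have hαrange : IsSolvable α.range := by
    have : α.range = B.map (QuotientGroup.mk' (levelStab d (v.length + m))) := by
      rw [hαdef, MonoidHom.range_comp, Subgroup.range_subtype]
    rw [this]
    exact aux_solvable_of_le (Subgroup.map_mono inf_le_left) hIH
  have hχrange : χ.range = (secSG d A v).map (QuotientGroup.mk' (levelStab d m)) := by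
    ext y
    constructor
    · rintro ⟨b, rfl⟩
      refine ⟨sec (b : AutT d) v, ?_, rfl⟩
      exact mem_secSG_iff.mpr ⟨(b : AutT d), b.2.2, b.2.1, rfl⟩
    · rintro ⟨s, hs, rfl⟩
      obtain ⟨g, hgs, hgA, rfl⟩ := mem_secSG_iff.mp hs
      exact ⟨⟨g, hgA, hgs⟩, rfl⟩
  rw [← hχrange]
  exact aux_range_solvable_of_ker_le α χ hker hαrange

theorem solvable_Hs_map (hd : 0 < d) (G H : Subgroup (AutT d))
    (hGfractal : IsFractal d G) (hHG : H ≤ G) (hconjH : ConjCl G H)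
    (hHsolv : Prosolvable H) :
    ∀ n m : ℕ, IsSolvable ↥((Hs d H n).map (QuotientGroup.mk' (levelStab d m))) := by
  intro n
  induction n with
  | zero =>
    intro m
    rw [Hs_zero]
    set N₀ : Subgroup ↥H := (levelStab d m).subgroupOf H with hN₀def
    haveI : N₀.Normal := (levelStab_normal d m).subgroupOf H
    have hopen : IsOpen (N₀ : Set ↥H) := by
      have : (N₀ : Set ↥H) = Subtype.val ⁻¹'
          ((levelStab d m : Subgroup (AutT d)) : Set (AutT d)) := rfl
      rw [this]
      exact (isOpen_levelStab d m).preimage continuous_subtype_val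
    have hq : IsSolvable (↥H ⧸ N₀) := hHsolv N₀ hopen
    set ψ : ↥H →* (AutT d ⧸ levelStab d m) :=
      (QuotientGroup.mk' (levelStab d m)).comp H.subtype with hψdef
    have hker : ψ.ker = N₀ := by
      ext x
      rw [MonoidHom.mem_ker, hψdef, MonoidHom.comp_apply, QuotientGroup.mk'_apply,
        QuotientGroup.eq_one_iff]
      exact Iff.rfl
    have hq' : IsSolvable (↥H ⧸ ψ.ker) :=
      aux_isSolvable_of_mulEquiv (QuotientGroup.quotientMulEquivOfEq hker.symm) hq
    have hrange : IsSolvable ψ.range :=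
      aux_isSolvable_of_mulEquiv (QuotientGroup.quotientKerEquivRange ψ) hq'
    have : ψ.range = H.map (QuotientGroup.mk' (levelStab d m)) := by
      rw [hψdef, MonoidHom.range_comp, Subgroup.range_subtype]
    rwa [this] at hrange
  | succ n ih =>
    intro m
    haveI : Finite (AutT d ⧸ levelStab d m) := finite_quot_levelStab hd m
    set q := QuotientGroup.mk' (levelStab d m) with hqdef
    have key : (Hs d H (n + 1)).map q
        = ⨆ o : Option (Vertex d),
            (Option.elim o (Hs d H n) (fun v => secSG d (Hs d H n) v)).map q := by
      rw [iSup_option (f := fun o : Option (Vertex d) =>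
        (Option.elim o (Hs d H n) (fun v => secSG d (Hs d H n) v)).map q)]
      rw [Hs_succ, Subgroup.map_sup, Subgroup.map_iSup]
      rfl
    rw [key]
    refine aux_isSolvable_iSup (G.map q) _ ?_ ?_ ?_
    · intro o
      rcases o with _ | v
      · exact Subgroup.map_mono (Hs_le G H hGfractal hHG n)
      · exact Subgroup.map_mono (((secSG_mono (Hs_le G H hGfractal hHG n) v)).trans
          (le_of_eq (hGfractal v)))
    · intro o p hp x hx
      obtain ⟨g, hg, rfl⟩ := hp
      obtain ⟨a, ha, rfl⟩ := hx
      have hconj : g * a * g⁻¹ ∈ Option.elim o (Hs d H n) (fun v => secSG d (Hs d H n) v) := by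
        rcases o with _ | v
        · exact conjCl_Hs G H hGfractal hconjH n g hg a ha
        · exact conjCl_secSG hGfractal (conjCl_Hs G H hGfractal hconjH n) v g hg a ha
      refine ⟨g * a * g⁻¹, hconj, ?_⟩
      rw [map_mul, map_mul, map_inv]
    · intro o
      rcases o with _ | v
      · exact ih m
      · exact solvable_secSG_map v m (ih (v.length + m))

/-- **Open normal prosolvable subgroups are self-similarity-closed.**
Let `d ≥ 2` and let `G` be a closed fractal subgroup of `Aut T_d`.  If `H` is an open
normal subgroup of `G` that is prosolvable, then the self-similar closure of `H` in `G`
is an open, normal, prosolvable subgroup of `G`. -/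
theorem prosolvable_selfSimilarClosure (d : ℕ) (hd : 2 ≤ d)
    (G : Subgroup (AutT d)) (hGclosed : IsClosed (G : Set (AutT d)))
    (hGfractal : IsFractal d G)
    (H : Subgroup (AutT d)) (hHG : H ≤ G)
    (hHopen : IsOpen ((H.subgroupOf G) : Set G))
    (hHnormal : (H.subgroupOf G).Normal)
    (hHsolv : Prosolvable H) :
    ∀ J : Subgroup (AutT d), IsSelfSimilarClosure d G H J →
      IsOpen ((J.subgroupOf G) : Set G) ∧ (J.subgroupOf G).Normal ∧ Prosolvable J := by
  intro J hJ
  obtain ⟨hHJ, hJG, hJclosed, hJss, hJmin⟩ := hJ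
  have hd0 : 0 < d := by omega
  -- conjugation-invariance of H under G
  have hconjH : ConjCl G H := by
    intro g hg x hx
    have hmem : (⟨x, hHG hx⟩ : ↥G) ∈ H.subgroupOf G := Subgroup.mem_subgroupOf.mpr hx
    have := hHnormal.conj_mem ⟨x, hHG hx⟩ hmem ⟨g, hg⟩
    exact Subgroup.mem_subgroupOf.mp this
  -- the constructed self-similar closure
  set U : Subgroup (AutT d) := ⨆ n, Hs d H n with hUdef
  set L : Subgroup (AutT d) := U.topologicalClosure with hLdef
  have hUG : U ≤ G := iSup_le fun n => Hs_le G H hGfractal hHG n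
  have hLG : L ≤ G := Subgroup.topologicalClosure_minimal U hUG hGclosed
  have hHL : H ≤ L := le_trans (le_iSup (Hs d H) 0) U.le_topologicalClosure
  have hLclosed : IsClosed (L : Set (AutT d)) := U.isClosed_topologicalClosure
  have hdir : Directed (· ≤ ·) (Hs d H) := (Hs_mono H).directed_le
  have hLss : IsSelfSimilar d L := by
    intro v x hx
    obtain ⟨g, hgs, hgL, rfl⟩ := mem_secSG_iff.mp hx
    have hgcl : g ∈ (stabT d v : Set (AutT d)) ∩ closure (U : Set (AutT d)) := by
      refine ⟨hgs, ?_⟩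
      rw [← Subgroup.topologicalClosure_coe]
      exact hgL
    have h2 : g ∈ closure ((stabT d v : Set (AutT d)) ∩ (U : Set (AutT d))) :=
      (isOpen_stabT v).inter_closure hgcl
    have h3 : sec g v ∈ closure ((fun g : AutT d => sec g v) ''
        ((stabT d v : Set (AutT d)) ∩ (U : Set (AutT d)))) := by
      apply image_closure_subset_closure_image (continuous_sec v)
      exact ⟨g, h2, rfl⟩
    have h4 : (fun g : AutT d => sec g v) ''
        ((stabT d v : Set (AutT d)) ∩ (U : Set (AutT d))) ⊆ (U : Set (AutT d)) := by
      rintro _ ⟨a, ⟨hastab, haU⟩, rfl⟩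
      obtain ⟨n, han⟩ := (Subgroup.mem_iSup_of_directed hdir).mp haU
      have : sec a v ∈ secSG d (Hs d H n) v := mem_secSG_iff.mpr ⟨a, hastab, han, rfl⟩
      have h5 : sec a v ∈ Hs d H (n + 1) := by
        rw [Hs_succ]
        exact Subgroup.mem_sup_right (Subgroup.mem_iSup_of_mem v this)
      exact SetLike.mem_coe.mpr ((Subgroup.mem_iSup_of_directed hdir).mpr ⟨n + 1, h5⟩)
    have h6 : sec g v ∈ closure (U : Set (AutT d)) := closure_mono h4 h3
    rw [← Subgroup.topologicalClosure_coe] at h6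
    exact h6
  -- J = L
  have hJL : J = L := by
    refine le_antisymm (hJmin L hHL hLG hLclosed hLss) ?_
    refine Subgroup.topologicalClosure_minimal U ?_ hJclosed
    exact iSup_le fun n => Hs_le_selfSimilar H J hHJ hJss n
  -- conjugation-invariance of J under G
  have hconjU : ConjCl G U := by
    intro g hg
    exact aux_conj_mem_iSup (fun n => conjCl_Hs G H hGfractal hconjH n g hg)
  have hconjJ : ConjCl G J := by
    rw [hJL]
    intro g hg x hx
    have hcont : Continuous fun y : AutT d => g * y * g⁻¹ :=
      ((continuous_mul_left g).comp continuous_id).mul continuous_const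
    have hx' : x ∈ closure (U : Set (AutT d)) := by
      rw [← Subgroup.topologicalClosure_coe]; exact hx
    have himg : g * x * g⁻¹ ∈ closure ((fun y : AutT d => g * y * g⁻¹) '' (U : Set (AutT d))) :=
      image_closure_subset_closure_image hcont ⟨x, hx', rfl⟩
    have hsub : (fun y : AutT d => g * y * g⁻¹) '' (U : Set (AutT d)) ⊆ (U : Set (AutT d)) := by
      rintro _ ⟨y, hy, rfl⟩
      exact hconjU g hg y hy
    have := closure_mono hsub himg
    rw [← Subgroup.topologicalClosure_coe] at this
    exact this
  refine ⟨?_, ?_, ?_⟩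
  -- openness
  · have hle : H.subgroupOf G ≤ J.subgroupOf G := fun x hx =>
      Subgroup.mem_subgroupOf.mpr (hHJ (Subgroup.mem_subgroupOf.mp hx))
    exact Subgroup.isOpen_mono hle hHopen
  -- normality
  · constructor
    intro n hn g
    rw [Subgroup.mem_subgroupOf] at hn ⊢
    have := hconjJ (g : AutT d) g.2 (n : AutT d) hn
    simpa using this
  -- prosolvability
  · intro N hNnormal hNopen
    -- find a level stabilizer inside N
    obtain ⟨V, hV, hVN⟩ := isOpen_induced_iff.mp hNopen
    have h1V : (1 : AutT d) ∈ V := by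
      have h1N : (1 : ↥J) ∈ Subtype.val ⁻¹' V := by rw [hVN]; exact one_mem N
      exact h1N
    obtain ⟨m, hm⟩ := levelStab_basis hd0 hV h1V
    set K : Subgroup ↥J := (levelStab d m).subgroupOf J with hKdef
    haveI : K.Normal := (levelStab_normal d m).subgroupOf J
    have hKN : K ≤ N := by
      intro x hx
      have : (x : AutT d) ∈ V := hm (Subgroup.mem_subgroupOf.mp hx)
      have : x ∈ Subtype.val ⁻¹' V := this
      rw [hVN] at this
      exact this
    -- reduce to solvability of J ⧸ K
    have hsurj : ∃ φ : (↥J ⧸ K) →* (↥J ⧸ N), Function.Surjective φ := by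
      refine ⟨QuotientGroup.map K N (MonoidHom.id _) (by simpa using hKN), ?_⟩
      intro x
      obtain ⟨y, rfl⟩ := QuotientGroup.mk'_surjective N x
      exact ⟨QuotientGroup.mk y, rfl⟩
    obtain ⟨φ, hφ⟩ := hsurj
    haveI : Finite (AutT d ⧸ levelStab d m) := finite_quot_levelStab hd0 m
    set q := QuotientGroup.mk' (levelStab d m) with hqdef
    set ψ : ↥J →* (AutT d ⧸ levelStab d m) := q.comp J.subtype with hψdef
    have hker : ψ.ker = K := by
      ext x
      rw [MonoidHom.mem_ker, hψdef, MonoidHom.comp_apply, QuotientGroup.mk'_apply,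
        QuotientGroup.eq_one_iff]
      exact Iff.rfl
    -- image of J equals image of U
    have hmap_eq : J.map q = U.map q := by
      refine le_antisymm ?_ (Subgroup.map_mono (hJL ▸ U.le_topologicalClosure))
      rintro _ ⟨x, hxJ, rfl⟩
      have hxcl : x ∈ closure (U : Set (AutT d)) := by
        rw [← Subgroup.topologicalClosure_coe]
        rw [hJL] at hxJ
        exact hxJ
      have hWopen : IsOpen ((fun z : AutT d => x⁻¹ * z) ⁻¹'
          ((levelStab d m : Subgroup (AutT d)) : Set (AutT d))) :=
        (isOpen_levelStab d m).preimage (continuous_const.mul continuous_id)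
      have hxW : x ∈ (fun z : AutT d => x⁻¹ * z) ⁻¹'
          ((levelStab d m : Subgroup (AutT d)) : Set (AutT d)) := by
        simp only [Set.mem_preimage, inv_mul_cancel]
        exact SetLike.mem_coe.mpr (one_mem _)
      obtain ⟨s, hsW, hsU⟩ := mem_closure_iff.mp hxcl _ hWopen hxW
      have hxs : q x = q s := by
        rw [hqdef, QuotientGroup.mk'_apply, QuotientGroup.mk'_apply]
        exact (QuotientGroup.eq (s := levelStab d m)).mpr hsW
      rw [hxs]
      exact ⟨s, hsU, rfl⟩
    have hUmap : U.map q = ⨆ n, (Hs d H n).map q := by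
      rw [hUdef, Subgroup.map_iSup]
    -- solvability of the image of U
    have hsolvU : IsSolvable ↥(U.map q) := by
      rw [hUmap]
      refine aux_isSolvable_iSup (G.map q) _ ?_ ?_ ?_
      · intro n
        exact Subgroup.map_mono (Hs_le G H hGfractal hHG n)
      · intro n p hp x hx
        obtain ⟨g, hg, rfl⟩ := hp
        obtain ⟨a, ha, rfl⟩ := hx
        refine ⟨g * a * g⁻¹, conjCl_Hs G H hGfractal hconjH n g hg a ha, ?_⟩
        rw [map_mul, map_mul, map_inv]
      · intro n
        exact solvable_Hs_map hd0 G H hGfractal hHG hconjH hHsolv n m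
    have hψrange : ψ.range = J.map q := by
      rw [hψdef, MonoidHom.range_comp, Subgroup.range_subtype]
    have hsolvrange : IsSolvable ψ.range := by
      rw [hψrange, hmap_eq]
      exact hsolvU
    have hsolvK : IsSolvable (↥J ⧸ K) := by
      have h1 : IsSolvable (↥J ⧸ ψ.ker) :=
        aux_isSolvable_of_mulEquiv (QuotientGroup.quotientKerEquivRange ψ).symm hsolvrange
      exact aux_isSolvable_of_mulEquiv (QuotientGroup.quotientMulEquivOfEq hker) h1
    haveI : Group.IsSolvable (↥J ⧸ K) := hsolvK
    exact solvable_of_surjective (f := φ) hφ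

end TreeDyn
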